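/- For every matrix M ∈ Matrix (Fin 4) (Fin 4) ℂ, the function t ↦ exp(t L₀) · M is bounded on [0, ∞) (i.e. there is C ≥ 0 with ‖exp(t L₀) M‖ ≤ C for all t ≥ 0) if and only if Π₊ M = 0. -/

import Mathlib

open Matrix Complex

noncomputable section

/-- Pauli matrix σ₁. -/
def sigma1 : Matrix (Fin 2) (Fin 2) ℂ := !![0, 1; 1, 0]

/-- Pauli matrix σ₂. -/
def sigma2 : Matrix (Fin 2) (Fin 2) ℂ := !![0, -Complex.I; Complex.I, 0]

/-- Pauli matrix σ₃. -/
def sigma3 : Matrix (Fin 2) (Fin 2) ℂ := !![1, 0; 0, -1]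

/-- The Dirac matrices α₁, α₂, α₃ in 2×2-block form `[[0, σⱼ],[σⱼ, 0]]`. -/
def diracAlpha : Fin 3 → Matrix (Fin 4) (Fin 4) ℂ :=
  ![Matrix.reindex finSumFinEquiv finSumFinEquiv (Matrix.fromBlocks 0 sigma1 sigma1 0),
    Matrix.reindex finSumFinEquiv finSumFinEquiv (Matrix.fromBlocks 0 sigma2 sigma2 0),
    Matrix.reindex finSumFinEquiv finSumFinEquiv (Matrix.fromBlocks 0 sigma3 sigma3 0)]

/-- The Dirac matrix β = `[[I₂, 0],[0, −I₂]]`. -/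
def diracBeta : Matrix (Fin 4) (Fin 4) ℂ :=
  Matrix.reindex finSumFinEquiv finSumFinEquiv
    (Matrix.fromBlocks (1 : Matrix (Fin 2) (Fin 2) ℂ) 0 0 (-1 : Matrix (Fin 2) (Fin 2) ℂ))

/-- α·x = x₁α₁ + x₂α₂ + x₃α₃. -/
def alphaDot (x : Fin 3 → ℝ) : Matrix (Fin 4) (Fin 4) ℂ :=
  (x 0 : ℂ) • diracAlpha 0 + (x 1 : ℂ) • diracAlpha 1 + (x 2 : ℂ) • diracAlpha 2

/-- Euclidean inner product on ℝ³. -/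
def inner3 (X Y : Fin 3 → ℝ) : ℝ := X 0 * Y 0 + X 1 * Y 1 + X 2 * Y 2

/-- Euclidean norm on ℝ³. -/
def norm3 (X : Fin 3 → ℝ) : ℝ := Real.sqrt (inner3 X X)

/-- Cross product on ℝ³. -/
def cross3 (X Y : Fin 3 → ℝ) : Fin 3 → ℝ :=
  ![X 1 * Y 2 - X 2 * Y 1, X 2 * Y 0 - X 0 * Y 2, X 0 * Y 1 - X 1 * Y 0]

/-- γ₅ := −i α₁α₂α₃. -/
def gamma5 : Matrix (Fin 4) (Fin 4) ℂ :=
  (-Complex.I) • (diracAlpha 0 * diracAlpha 1 * diracAlpha 2)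

/-- S·X := −γ₅ (α·X). -/
def sDot (X : Fin 3 → ℝ) : Matrix (Fin 4) (Fin 4) ℂ := -(gamma5 * alphaDot X)

/-- P₊ := (I₄ − iβ(α·ν))/2. -/
def Pplus (ν : Fin 3 → ℝ) : Matrix (Fin 4) (Fin 4) ℂ :=
  ((1 : ℂ) / 2) • (1 - Complex.I • (diracBeta * alphaDot ν))

/-- P₋ := (I₄ + iβ(α·ν))/2. -/
def Pminus (ν : Fin 3 → ℝ) : Matrix (Fin 4) (Fin 4) ℂ :=
  ((1 : ℂ) / 2) • (1 + Complex.I • (diracBeta * alphaDot ν))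

/-- λ := √(|ν × ξ|² + 1). -/
def lam (ν ξ : Fin 3 → ℝ) : ℝ :=
  Real.sqrt (inner3 (cross3 ν ξ) (cross3 ν ξ) + 1)

/-- Π₊ := (1/2)(I₄ + λ⁻¹(S·τ − iβ(α·ν))), τ = ν × ξ. -/
def Piplus (ν ξ : Fin 3 → ℝ) : Matrix (Fin 4) (Fin 4) ℂ :=
  ((1 : ℂ) / 2) •
    (1 + ((lam ν ξ : ℂ))⁻¹ • (sDot (cross3 ν ξ) - Complex.I • (diracBeta * alphaDot ν)))

/-- Π₋ := (1/2)(I₄ − λ⁻¹(S·τ − iβ(α·ν))), τ = ν × ξ. -/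
def Piminus (ν ξ : Fin 3 → ℝ) : Matrix (Fin 4) (Fin 4) ℂ :=
  ((1 : ℂ) / 2) •
    (1 - ((lam ν ξ : ℂ))⁻¹ • (sDot (cross3 ν ξ) - Complex.I • (diracBeta * alphaDot ν)))

/-- ρ₊ := (i⟨ν,ξ⟩ + λ)/s. -/
def rhoP (ν ξ : Fin 3 → ℝ) (s : ℝ) : ℂ :=
  (Complex.I * (inner3 ν ξ : ℂ) + (lam ν ξ : ℂ)) / (s : ℂ)

/-- ρ₋ := (i⟨ν,ξ⟩ − λ)/s. -/
def rhoM (ν ξ : Fin 3 → ℝ) (s : ℝ) : ℂ :=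
  (Complex.I * (inner3 ν ξ : ℂ) - (lam ν ξ : ℂ)) / (s : ℂ)

/-- L₀ := s⁻¹ (iα·ν)(α·ξ + β). -/
def L0 (ν ξ : Fin 3 → ℝ) (s : ℝ) : Matrix (Fin 4) (Fin 4) ℂ :=
  ((s : ℂ))⁻¹ • ((Complex.I • alphaDot ν) * (alphaDot ξ + diracBeta))

/-- k₊ := (1 + λ⁻¹)/2. -/
def kPlus (ν ξ : Fin 3 → ℝ) : ℝ := (1 + (lam ν ξ)⁻¹) / 2

/-- k₋ := (1 − λ⁻¹)/2. -/
def kMinus (ν ξ : Fin 3 → ℝ) : ℝ := (1 - (lam ν ξ)⁻¹) / 2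

/-- Θ := (2λ)⁻¹ S·τ, τ = ν × ξ. -/
def theta (ν ξ : Fin 3 → ℝ) : Matrix (Fin 4) (Fin 4) ℂ :=
  ((2 * lam ν ξ : ℝ) : ℂ)⁻¹ • sDot (cross3 ν ξ)

/-- The fundamental solution φ_{m,z,w} of the free Dirac operator. -/
def phiFS (m : ℝ) (z w : ℂ) (x : Fin 3 → ℝ) : Matrix (Fin 4) (Fin 4) ℂ :=
  (Complex.exp (Complex.I * w * (norm3 x : ℂ)) / (4 * (Real.pi : ℂ) * (norm3 x : ℂ))) •
    (z • (1 : Matrix (Fin 4) (Fin 4) ℂ) + (m : ℂ) • diracBeta +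
      ((1 - Complex.I * w * (norm3 x : ℂ)) * Complex.I / ((norm3 x : ℂ) ^ 2)) • alphaDot x)

attribute [local instance] Matrix.normedAddCommGroup Matrix.normedSpace

lemma alpha0_eq : diracAlpha 0 = !![0,0,0,1; 0,0,1,0; 0,1,0,0; 1,0,0,0] := by
  ext i j
  fin_cases i <;> fin_cases j <;>
    norm_num [diracAlpha, sigma1, Matrix.reindex_apply, finSumFinEquiv, Matrix.fromBlocks,
      Fin.addCases, Matrix.submatrix_apply, Fin.subNat, Fin.castLT, Matrix.vecHead, Matrix.vecTail]

lemma alpha1_eq : diracAlpha 1 = !![0,0,0,-Complex.I; 0,0,Complex.I,0; 0,-Complex.I,0,0; Complex.I,0,0,0] := by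
  ext i j
  fin_cases i <;> fin_cases j <;>
    norm_num [diracAlpha, sigma2, Matrix.reindex_apply, finSumFinEquiv, Matrix.fromBlocks,
      Fin.addCases, Matrix.submatrix_apply, Fin.subNat, Fin.castLT, Matrix.vecHead, Matrix.vecTail]

lemma alpha2_eq : diracAlpha 2 = !![0,0,1,0; 0,0,0,-1; 1,0,0,0; 0,-1,0,0] := by
  ext i j
  fin_cases i <;> fin_cases j <;>
    norm_num [diracAlpha, sigma3, Matrix.reindex_apply, finSumFinEquiv, Matrix.fromBlocks,
      Fin.addCases, Matrix.submatrix_apply, Fin.subNat, Fin.castLT, Matrix.vecHead, Matrix.vecTail,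
      Matrix.cons_val_two]

lemma beta_eq : diracBeta = !![1,0,0,0; 0,1,0,0; 0,0,-1,0; 0,0,0,-1] := by
  ext i j
  fin_cases i <;> fin_cases j <;>
    norm_num [diracBeta, Matrix.reindex_apply, finSumFinEquiv, Matrix.fromBlocks,
      Fin.addCases, Matrix.submatrix_apply, Fin.subNat, Fin.castLT, Matrix.vecHead, Matrix.vecTail,
      Matrix.one_apply]

lemma alphaDot_eq (x : Fin 3 → ℝ) : alphaDot x =
    !![0, 0, (x 2 : ℂ), (x 0 : ℂ) - Complex.I * (x 1 : ℂ);
       0, 0, (x 0 : ℂ) + Complex.I * (x 1 : ℂ), -(x 2 : ℂ);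
       (x 2 : ℂ), (x 0 : ℂ) - Complex.I * (x 1 : ℂ), 0, 0;
       (x 0 : ℂ) + Complex.I * (x 1 : ℂ), -(x 2 : ℂ), 0, 0] := by
  rw [alphaDot, alpha0_eq, alpha1_eq, alpha2_eq]
  ext i j
  fin_cases i <;> fin_cases j <;> simp [Matrix.vecHead, Matrix.vecTail] <;> ring
lemma gamma5_eq : gamma5 = !![0,0,1,0; 0,0,0,1; 1,0,0,0; 0,1,0,0] := by
  rw [gamma5, alpha0_eq, alpha1_eq, alpha2_eq]
  ext i j
  fin_cases i <;> fin_cases j <;>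
    simp [Matrix.mul_apply, Fin.sum_univ_four, Matrix.vecHead, Matrix.vecTail]

lemma sDot_eq (X : Fin 3 → ℝ) : sDot X =
    !![-(X 2 : ℂ), -((X 0 : ℂ) - Complex.I * (X 1 : ℂ)), 0, 0;
       -((X 0 : ℂ) + Complex.I * (X 1 : ℂ)), (X 2 : ℂ), 0, 0;
       0, 0, -(X 2 : ℂ), -((X 0 : ℂ) - Complex.I * (X 1 : ℂ));
       0, 0, -((X 0 : ℂ) + Complex.I * (X 1 : ℂ)), (X 2 : ℂ)] := by
  rw [sDot, gamma5_eq, alphaDot_eq]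
  ext i j
  fin_cases i <;> fin_cases j <;>
    simp [Matrix.mul_apply, Fin.sum_univ_four, Matrix.vecHead, Matrix.vecTail]

/-- The key matrix K = S·τ − iβ(α·ν). -/
def Kmat (ν ξ : Fin 3 → ℝ) : Matrix (Fin 4) (Fin 4) ℂ :=
  sDot (cross3 ν ξ) - Complex.I • (diracBeta * alphaDot ν)

lemma Kmat_eq (ν ξ : Fin 3 → ℝ) :
    Kmat ν ξ =
    let τ : Fin 3 → ℂ := fun i => ((cross3 ν ξ) i : ℂ)
    !![-(τ 2), -(τ 0 - Complex.I * τ 1), -Complex.I * (ν 2 : ℂ),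
         -Complex.I * ((ν 0 : ℂ) - Complex.I * (ν 1 : ℂ));
       -(τ 0 + Complex.I * τ 1), τ 2, -Complex.I * ((ν 0 : ℂ) + Complex.I * (ν 1 : ℂ)),
         Complex.I * (ν 2 : ℂ);
       Complex.I * (ν 2 : ℂ), Complex.I * ((ν 0 : ℂ) - Complex.I * (ν 1 : ℂ)), -(τ 2),
         -(τ 0 - Complex.I * τ 1);
       Complex.I * ((ν 0 : ℂ) + Complex.I * (ν 1 : ℂ)), -Complex.I * (ν 2 : ℂ),
         -(τ 0 + Complex.I * τ 1), τ 2] := by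
  rw [Kmat, sDot_eq, beta_eq, alphaDot_eq]
  ext i j
  fin_cases i <;> fin_cases j <;>
    simp [Matrix.mul_apply, Fin.sum_univ_four, Matrix.vecHead, Matrix.vecTail] <;> ring
lemma Kmat_sq (ν ξ : Fin 3 → ℝ) (hν : inner3 ν ν = 1) :
    Kmat ν ξ * Kmat ν ξ = ((inner3 (cross3 ν ξ) (cross3 ν ξ) + 1 : ℝ) : ℂ) • 1 := by
  have h0 : ((ν 0 * ν 0 + ν 1 * ν 1 + ν 2 * ν 2 : ℝ) : ℂ) = ((1 : ℝ) : ℂ) := by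
    rw [show ν 0 * ν 0 + ν 1 * ν 1 + ν 2 * ν 2 = 1 from hν]
  push_cast at h0
  have hI2 : (Complex.I)^2 = -1 := Complex.I_sq
  have hI3 : (Complex.I)^3 = -Complex.I := by rw [pow_succ, hI2]; ring
  have hI4 : (Complex.I)^4 = 1 := by rw [pow_succ, hI3]; simp [Complex.I_mul_I]
  rw [Kmat_eq]
  ext i j
  fin_cases i <;> fin_cases j <;>
    simp [Matrix.mul_apply, Fin.sum_univ_four, Matrix.vecHead, Matrix.vecTail, cross3, inner3,
      Matrix.one_apply]
  all_goals push_cast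
  all_goals ring_nf
  all_goals try simp only [hI2, hI3, hI4]
  all_goals first
    | ring1
    | linear_combination h0
lemma L0_eq (ν ξ : Fin 3 → ℝ) (s : ℝ) :
    L0 ν ξ s = ((s : ℂ))⁻¹ • ((Complex.I * (inner3 ν ξ : ℂ)) • (1 : Matrix (Fin 4) (Fin 4) ℂ)
      + Kmat ν ξ) := by
  have hI2 : (Complex.I)^2 = -1 := Complex.I_sq
  have hI3 : (Complex.I)^3 = -Complex.I := by rw [pow_succ, hI2]; ring
  rw [L0, Kmat_eq]
  congr 1
  rw [alphaDot_eq ν, alphaDot_eq ξ, beta_eq]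
  ext i j
  fin_cases i <;> fin_cases j <;>
    simp [Matrix.mul_apply, Fin.sum_univ_four, Matrix.vecHead, Matrix.vecTail, cross3, inner3,
      Matrix.one_apply]
  all_goals ring_nf
  all_goals try simp only [hI2, hI3]
  all_goals try ring1
lemma inner3_self_nonneg (τ : Fin 3 → ℝ) : 0 ≤ inner3 τ τ := by
  rw [inner3]; nlinarith [sq_nonneg (τ 0), sq_nonneg (τ 1), sq_nonneg (τ 2)]

lemma one_le_lam (ν ξ : Fin 3 → ℝ) : 1 ≤ lam ν ξ := by
  rw [lam]
  calc (1:ℝ) = Real.sqrt 1 := Real.sqrt_one.symm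
  _ ≤ _ := Real.sqrt_le_sqrt (by nlinarith [inner3_self_nonneg (cross3 ν ξ)])

lemma lam_pos (ν ξ : Fin 3 → ℝ) : 0 < lam ν ξ := lt_of_lt_of_le one_pos (one_le_lam ν ξ)

lemma lam_sq (ν ξ : Fin 3 → ℝ) :
    (lam ν ξ) ^ 2 = inner3 (cross3 ν ξ) (cross3 ν ξ) + 1 := by
  rw [lam]; exact Real.sq_sqrt (by nlinarith [inner3_self_nonneg (cross3 ν ξ)])

lemma Kmat_sq' (ν ξ : Fin 3 → ℝ) (hν : inner3 ν ν = 1) :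
    Kmat ν ξ * Kmat ν ξ = (((lam ν ξ : ℝ) : ℂ))^2 • 1 := by
  rw [Kmat_sq ν ξ hν, ← lam_sq]; push_cast; ring_nf

lemma Piplus_def (ν ξ : Fin 3 → ℝ) :
    Piplus ν ξ = ((1:ℂ)/2) • (1 + (((lam ν ξ : ℝ)):ℂ)⁻¹ • Kmat ν ξ) := rfl

lemma Piminus_def (ν ξ : Fin 3 → ℝ) :
    Piminus ν ξ = ((1:ℂ)/2) • (1 - (((lam ν ξ : ℝ)):ℂ)⁻¹ • Kmat ν ξ) := rfl

lemma lamC_ne (ν ξ : Fin 3 → ℝ) : ((lam ν ξ : ℝ) : ℂ) ≠ 0 := by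
  exact_mod_cast (lam_pos ν ξ).ne'

section proj
variable (ν ξ : Fin 3 → ℝ) (hν : inner3 ν ν = 1)

lemma Pi_add : Piplus ν ξ + Piminus ν ξ = 1 := by
  rw [Piplus_def, Piminus_def]
  match_scalars <;> ring

include hν

lemma Pip_mul_Pip : Piplus ν ξ * Piplus ν ξ = Piplus ν ξ := by
  have h := Kmat_sq' ν ξ hν
  have hc := lamC_ne ν ξ
  rw [Piplus_def]
  simp only [Matrix.smul_mul, Matrix.mul_smul, mul_add, add_mul, one_mul, mul_one, h, smul_smul,
    smul_add]
  match_scalars <;> field_simp <;> ring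

lemma Pim_mul_Pim : Piminus ν ξ * Piminus ν ξ = Piminus ν ξ := by
  have h := Kmat_sq' ν ξ hν
  have hc := lamC_ne ν ξ
  rw [Piminus_def]
  simp only [Matrix.smul_mul, Matrix.mul_smul, mul_sub, sub_mul, one_mul, mul_one, h, smul_smul,
    smul_sub]
  match_scalars <;> field_simp <;> ring

lemma Pip_mul_Pim : Piplus ν ξ * Piminus ν ξ = 0 := by
  have h := Kmat_sq' ν ξ hν
  have hc := lamC_ne ν ξ
  rw [Piplus_def, Piminus_def]
  simp only [Matrix.smul_mul, Matrix.mul_smul, mul_sub, sub_mul, mul_add, add_mul, one_mul,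
    mul_one, h, smul_smul, smul_sub, smul_add]
  match_scalars <;> field_simp <;> ring

lemma Pim_mul_Pip : Piminus ν ξ * Piplus ν ξ = 0 := by
  have h := Kmat_sq' ν ξ hν
  have hc := lamC_ne ν ξ
  rw [Piplus_def, Piminus_def]
  simp only [Matrix.smul_mul, Matrix.mul_smul, mul_sub, sub_mul, mul_add, add_mul, one_mul,
    mul_one, h, smul_smul, smul_sub, smul_add]
  match_scalars <;> field_simp <;> ring

end proj

lemma tL0_eq (ν ξ : Fin 3 → ℝ) (s : ℝ) (hs : 0 < s) (t : ℝ) :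
    (t : ℂ) • L0 ν ξ s =
      ((t : ℂ) * rhoP ν ξ s) • Piplus ν ξ + ((t : ℂ) * rhoM ν ξ s) • Piminus ν ξ := by
  have hc := lamC_ne ν ξ
  have hsC : (s : ℂ) ≠ 0 := by exact_mod_cast hs.ne'
  rw [L0_eq, Piplus_def, Piminus_def, rhoP, rhoM]
  simp only [smul_add, smul_sub, smul_smul]
  match_scalars <;> field_simp <;> ring
lemma proj_pow (P Q : Matrix (Fin 4) (Fin 4) ℂ) (hP : P * P = P) (hQ : Q * Q = Q)
    (hPQ : P * Q = 0) (hQP : Q * P = 0) (hsum : P + Q = 1) (a b : ℂ) :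
    ∀ n : ℕ, (a • P + b • Q) ^ n = (a ^ n) • P + (b ^ n) • Q := by
  intro n
  induction n with
  | zero => simpa using hsum.symm
  | succ n ih =>
      rw [pow_succ, ih]
      simp only [mul_add, add_mul, Matrix.smul_mul, Matrix.mul_smul, hP, hQ, hPQ, hQP,
        smul_smul, smul_zero, add_zero, zero_add]
      rw [← pow_succ', ← pow_succ']

lemma exp_proj (P Q : Matrix (Fin 4) (Fin 4) ℂ) (hP : P * P = P) (hQ : Q * Q = Q)
    (hPQ : P * Q = 0) (hQP : Q * P = 0) (hsum : P + Q = 1) (a b : ℂ) :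
    NormedSpace.exp (a • P + b • Q) = (Complex.exp a) • P + (Complex.exp b) • Q := by
  have hsa : Summable fun n : ℕ => ((n.factorial : ℂ))⁻¹ • a ^ n :=
    NormedSpace.expSeries_summable' (𝕂 := ℂ) a
  have hsb : Summable fun n : ℕ => ((n.factorial : ℂ))⁻¹ • b ^ n :=
    NormedSpace.expSeries_summable' (𝕂 := ℂ) b
  rw [NormedSpace.exp_eq_tsum ℂ]
  have h1 : ∀ n : ℕ, ((n.factorial : ℂ))⁻¹ • (a • P + b • Q) ^ n =
      (((n.factorial : ℂ))⁻¹ • a ^ n) • P + (((n.factorial : ℂ))⁻¹ • b ^ n) • Q := by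
    intro n
    rw [proj_pow P Q hP hQ hPQ hQP hsum a b n]
    simp [smul_add, smul_smul]
  calc ∑' n : ℕ, ((n.factorial : ℂ))⁻¹ • (a • P + b • Q) ^ n
      = ∑' n : ℕ, ((((n.factorial : ℂ))⁻¹ • a ^ n) • P + (((n.factorial : ℂ))⁻¹ • b ^ n) • Q) :=
        tsum_congr h1
    _ = (∑' n : ℕ, ((n.factorial : ℂ))⁻¹ • a ^ n) • P
        + (∑' n : ℕ, ((n.factorial : ℂ))⁻¹ • b ^ n) • Q := by
        rw [Summable.tsum_add (hsa.smul_const P) (hsb.smul_const Q), Summable.tsum_smul_const hsa,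
          Summable.tsum_smul_const hsb]
    _ = (Complex.exp a) • P + (Complex.exp b) • Q := by
        rw [Complex.exp_eq_exp_ℂ, NormedSpace.exp_eq_tsum ℂ]
lemma exp_tL0 (ν ξ : Fin 3 → ℝ) (s : ℝ) (hν : inner3 ν ν = 1) (hs : 0 < s) (t : ℝ) :
    NormedSpace.exp ((t : ℂ) • L0 ν ξ s) =
      Complex.exp ((t : ℂ) * rhoP ν ξ s) • Piplus ν ξ
        + Complex.exp ((t : ℂ) * rhoM ν ξ s) • Piminus ν ξ := by
  rw [tL0_eq ν ξ s hs t,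
    exp_proj _ _ (Pip_mul_Pip ν ξ hν) (Pim_mul_Pim ν ξ hν) (Pip_mul_Pim ν ξ hν)
      (Pim_mul_Pip ν ξ hν) (Pi_add ν ξ)]

lemma rhoP_re (ν ξ : Fin 3 → ℝ) (s : ℝ) (hs : s ≠ 0) : (rhoP ν ξ s).re = lam ν ξ / s := by
  simp [rhoP, Complex.div_re, Complex.normSq]
  field_simp

lemma rhoM_re (ν ξ : Fin 3 → ℝ) (s : ℝ) (hs : s ≠ 0) : (rhoM ν ξ s).re = -(lam ν ξ / s) := by
  simp [rhoM, Complex.div_re, Complex.normSq, Complex.sub_re]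
  field_simp

lemma abs_exp_t_rhoP (ν ξ : Fin 3 → ℝ) (s t : ℝ) (hs : s ≠ 0) :
    ‖Complex.exp ((t : ℂ) * rhoP ν ξ s)‖ = Real.exp (t * (lam ν ξ / s)) := by
  rw [Complex.norm_exp]
  congr 1
  simp [Complex.mul_re, rhoP_re ν ξ s hs]

lemma abs_exp_t_rhoM (ν ξ : Fin 3 → ℝ) (s t : ℝ) (hs : s ≠ 0) :
    ‖Complex.exp ((t : ℂ) * rhoM ν ξ s)‖ = Real.exp (-(t * (lam ν ξ / s))) := by
  rw [Complex.norm_exp]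
  congr 1
  simp [Complex.mul_re, rhoM_re ν ξ s hs]
-- STATEMENT 15
theorem stmt15 (ν ξ : Fin 3 → ℝ) (s : ℝ) (hν : norm3 ν = 1) (hs : 0 < s)
    (M : Matrix (Fin 4) (Fin 4) ℂ) :
    (∃ C : ℝ, 0 ≤ C ∧ ∀ t : ℝ, 0 ≤ t →
        ‖NormedSpace.exp (((t : ℂ)) • L0 ν ξ s) * M‖ ≤ C) ↔
      Piplus ν ξ * M = 0 := by
  have hν' : inner3 ν ν = 1 := by
    have h2 := Real.sq_sqrt (inner3_self_nonneg ν)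
    rw [norm3] at hν; rw [hν] at h2; simpa using h2.symm
  have hexpM : ∀ t : ℝ, 0 ≤ t → ‖Complex.exp ((t : ℂ) * rhoM ν ξ s)‖ ≤ 1 := by
    intro t ht
    rw [abs_exp_t_rhoM ν ξ s t hs.ne']
    calc Real.exp (-(t * (lam ν ξ / s))) ≤ Real.exp 0 :=
          Real.exp_le_exp.mpr (neg_nonpos.mpr (mul_nonneg ht (le_of_lt (div_pos (lam_pos ν ξ) hs))))
      _ = 1 := Real.exp_zero
  constructor
  · rintro ⟨C, hC0, hC⟩
    by_contra hne
    have hex : ∃ i j, (Piplus ν ξ * M) i j ≠ 0 := by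
      by_contra hall; push_neg at hall
      exact hne (by ext i j; simpa using hall i j)
    obtain ⟨i, j, hp⟩ := hex
    set p := (Piplus ν ξ * M) i j with hpdef
    set q := (Piminus ν ξ * M) i j with hqdef
    have hpn : 0 < ‖p‖ := norm_pos_iff.mpr hp
    have key : ∀ t : ℝ, 0 ≤ t → Real.exp (t * (lam ν ξ / s)) * ‖p‖ ≤ C + ‖q‖ := by
      intro t ht
      have hEntry : (NormedSpace.exp ((t : ℂ) • L0 ν ξ s) * M) i j
          = Complex.exp ((t : ℂ) * rhoP ν ξ s) * p + Complex.exp ((t : ℂ) * rhoM ν ξ s) * q := by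
        rw [exp_tL0 ν ξ s hν' hs t, hpdef, hqdef]
        simp [Matrix.add_mul, Matrix.smul_mul, Matrix.add_apply, Matrix.smul_apply, smul_eq_mul]
      have h1 : ‖(NormedSpace.exp ((t : ℂ) • L0 ν ξ s) * M) i j‖ ≤ C :=
        le_trans (Matrix.norm_entry_le_entrywise_sup_norm _) (hC t ht)
      rw [hEntry] at h1
      set a := Complex.exp ((t : ℂ) * rhoP ν ξ s) * p
      set b := Complex.exp ((t : ℂ) * rhoM ν ξ s) * q
      have ha : ‖a‖ = Real.exp (t * (lam ν ξ / s)) * ‖p‖ := by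
        rw [norm_mul, abs_exp_t_rhoP ν ξ s t hs.ne']
      have hb : ‖b‖ ≤ ‖q‖ := by
        rw [norm_mul]
        calc ‖Complex.exp ((t : ℂ) * rhoM ν ξ s)‖ * ‖q‖ ≤ 1 * ‖q‖ :=
              mul_le_mul_of_nonneg_right (hexpM t ht) (norm_nonneg q)
          _ = ‖q‖ := one_mul _
      have h2 : ‖a‖ ≤ ‖a + b‖ + ‖b‖ := by
        calc ‖a‖ = ‖(a + b) - b‖ := by ring_nf
          _ ≤ ‖a + b‖ + ‖b‖ := norm_sub_le _ _
      rw [ha] at h2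
      linarith
    set r := lam ν ξ / s with hr
    have hrpos : 0 < r := div_pos (lam_pos ν ξ) hs
    set t0 := (C + ‖q‖) / (r * ‖p‖) with ht0def
    have ht0 : 0 ≤ t0 := by positivity
    have h3 := key t0 ht0
    have h4 : 1 + t0 * r ≤ Real.exp (t0 * r) := Real.add_one_le_exp (t0 * r) |>.trans_eq' (by ring)
    have h5 : t0 * r * ‖p‖ = C + ‖q‖ := by
      have hne1 : r ≠ 0 := hrpos.ne'
      have hne2 : ‖p‖ ≠ 0 := hpn.ne'
      calc t0 * r * ‖p‖ = (C + ‖q‖) / (r * ‖p‖) * (r * ‖p‖) := by rw [ht0def]; ring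
        _ = C + ‖q‖ := div_mul_cancel₀ _ (mul_ne_zero hne1 hne2)
    nlinarith [norm_nonneg q, Real.exp_pos (t0 * r)]
  · intro h
    refine ⟨‖M‖, norm_nonneg M, fun t ht => ?_⟩
    have hM : Piminus ν ξ * M = M := by
      have h2 : (Piplus ν ξ + Piminus ν ξ) * M = M := by rw [Pi_add]; simp
      rw [Matrix.add_mul, h, zero_add] at h2; exact h2
    rw [exp_tL0 ν ξ s hν' hs t, Matrix.add_mul, Matrix.smul_mul, Matrix.smul_mul, h, hM,
      smul_zero, zero_add, norm_smul]
    have h6 : ‖Complex.exp ((t : ℂ) * rhoM ν ξ s)‖ ≤ 1 := hexpM t ht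
    nlinarith [norm_nonneg M, norm_nonneg (Complex.exp ((t : ℂ) * rhoM ν ξ s))]

end
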